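/- Let G be a k-regular finite simple graph on n ≥ 2 vertices, let θ_2 denote the second largest eigenvalue (with multiplicity) of its adjacency matrix, and let p be a positive integer. Then every (p+1)-plex P of G satisfies |V(P)| · (n - k + θ_2) ≤ n · (p + 1 + θ_2); in particular, when n - k + θ_2 > 0, the order of any (p+1)-plex of G is at most n(p + 1 + θ_2)/(n - k + θ_2). -/

import Mathlib

open SimpleGraph Polynomial
open Matrix Finset

section AuxSpectral

set_option linter.unusedSectionVars false

variable {V : Type*} [Fintype V] [DecidableEq V]

theorem charpoly_eq_prod {V : Type*} [Fintype V] [DecidableEq V] (A : Matrix V V ℝ)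
    (hA : A.IsHermitian) :
    A.charpoly = ∏ i, (X - C (hA.eigenvalues i)) := by
  set U : Matrix V V ℝ := (hA.eigenvectorUnitary : Matrix V V ℝ) with hUdef
  have hUU : U * star U = 1 := (Matrix.mem_unitaryGroup_iff).mp hA.eigenvectorUnitary.2
  have hAeq : A = U * diagonal hA.eigenvalues * star U := by
    have h := hA.spectral_theorem
    have h2 : (RCLike.ofReal ∘ hA.eigenvalues : V → ℝ) = hA.eigenvalues := by ext i; simp
    rw [h2] at h
    exact h
  have hcomm : ∀ M : Matrix V V ℝ[X], M * Matrix.scalar V X = Matrix.scalar V X * M :=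
    fun M => (Matrix.scalar_commute (X : ℝ[X]) (fun r => Commute.all _ _) M).symm
  have key : charmatrix A =
      (C : ℝ →+* ℝ[X]).mapMatrix U * charmatrix (diagonal hA.eigenvalues)
        * (C : ℝ →+* ℝ[X]).mapMatrix (star U) := by
    conv_lhs => rw [hAeq]
    simp only [charmatrix, Matrix.mul_sub, Matrix.sub_mul, _root_.map_mul]
    congr 1
    · rw [Matrix.mul_assoc, ← hcomm, ← Matrix.mul_assoc, ← _root_.map_mul, hUU, _root_.map_one,
        Matrix.one_mul]
  have hdetU : ((C : ℝ →+* ℝ[X]).mapMatrix U).det * ((C : ℝ →+* ℝ[X]).mapMatrix (star U)).det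
      = 1 := by
    rw [← Matrix.det_mul, ← _root_.map_mul, hUU, _root_.map_one, Matrix.det_one]
  have hcd : charmatrix (diagonal hA.eigenvalues) =
      diagonal (fun i => (X : ℝ[X]) - C (hA.eigenvalues i)) := by
    ext i j
    by_cases h : i = j
    · subst h; simp [charmatrix_apply_eq]
    · simp [charmatrix_apply_ne _ _ _ h, Matrix.diagonal_apply_ne _ h]
  rw [Matrix.charpoly, key, Matrix.det_mul, Matrix.det_mul]
  rw [mul_comm (((C : ℝ →+* ℝ[X]).mapMatrix U).det), mul_assoc, hdetU, mul_one, hcd,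
    Matrix.det_diagonal]

theorem aux_eval_charpoly (A : Matrix V V ℝ) (r : ℝ) :
    A.charpoly.eval r = (r • (1 : Matrix V V ℝ) - A).det := by
  rw [Matrix.charpoly, ← coe_evalRingHom, RingHom.map_det]
  congr 1
  ext i j
  by_cases h : i = j <;>
    simp [h, charmatrix_apply_eq, charmatrix_apply_ne, Matrix.one_apply, Matrix.smul_apply]

theorem aux_ray (A : Matrix V V ℝ) (kk : ℝ) (hpos : ∀ i j, 0 ≤ A i j)
    (hrow : ∀ i, ∑ j, A i j = kk) (hcol : ∀ j, ∑ i, A i j = kk) (v : V → ℝ) :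
    v ⬝ᵥ (A *ᵥ v) ≤ kk * (v ⬝ᵥ v) := by
  have expand : v ⬝ᵥ (A *ᵥ v) = ∑ i, ∑ j, A i j * (v i * v j) := by
    simp only [dotProduct, Matrix.mulVec, Finset.mul_sum]
    exact Finset.sum_congr rfl fun i _ => Finset.sum_congr rfl fun j _ => by ring
  rw [expand]
  have step : ∑ i, ∑ j, A i j * (v i * v j) ≤ ∑ i, ∑ j, A i j * ((v i ^ 2 + v j ^ 2) / 2) := by
    refine Finset.sum_le_sum fun i _ => Finset.sum_le_sum fun j _ => ?_
    exact mul_le_mul_of_nonneg_left (by nlinarith [sq_nonneg (v i - v j)]) (hpos i j)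
  refine le_trans step (le_of_eq ?_)
  have e1 : ∑ i, ∑ j, A i j * ((v i ^ 2 + v j ^ 2) / 2)
      = ∑ i, ∑ j, (A i j * (v i ^ 2) / 2) + ∑ i, ∑ j, (A i j * (v j ^ 2) / 2) := by
    rw [← Finset.sum_add_distrib]
    refine Finset.sum_congr rfl fun i _ => ?_
    rw [← Finset.sum_add_distrib]
    exact Finset.sum_congr rfl fun j _ => by ring
  rw [e1]
  have e2 : ∑ i, ∑ j, (A i j * (v i ^ 2) / 2) = ∑ i : V, kk * v i ^ 2 / 2 := by
    refine Finset.sum_congr rfl fun i _ => ?_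
    rw [← Finset.sum_div, ← Finset.sum_mul, hrow i]
  have e3 : ∑ i, ∑ j, (A i j * (v j ^ 2) / 2) = ∑ j : V, kk * v j ^ 2 / 2 := by
    rw [Finset.sum_comm]
    refine Finset.sum_congr rfl fun j _ => ?_
    rw [← Finset.sum_div, ← Finset.sum_mul, hcol j]
  rw [e2, e3, ← Finset.sum_add_distrib]
  simp only [dotProduct, Finset.mul_sum]
  refine Finset.sum_congr rfl fun i _ => ?_
  ring

theorem aux_eigen_le (A : Matrix V V ℝ) (hA : A.IsHermitian) (kk : ℝ)
    (hq : ∀ v : V → ℝ, v ⬝ᵥ (A *ᵥ v) ≤ kk * (v ⬝ᵥ v)) (i : V) :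
    hA.eigenvalues i ≤ kk := by
  have h1 := hA.eigenvalues_eq i
  have hnorm : (⇑(hA.eigenvectorBasis i)) ⬝ᵥ (⇑(hA.eigenvectorBasis i)) = 1 := by
    have h2 := hA.eigenvectorBasis.orthonormal.1 i
    have h3 : @inner ℝ _ _ (hA.eigenvectorBasis i) (hA.eigenvectorBasis i) = 1 := by
      rw [real_inner_self_eq_norm_mul_norm, h2]; norm_num
    rw [PiLp.inner_apply] at h3
    simp only [RCLike.inner_apply, conj_trivial] at h3
    simpa [dotProduct] using h3
  have h3 : hA.eigenvalues i = (⇑(hA.eigenvectorBasis i)) ⬝ᵥ (A *ᵥ ⇑(hA.eigenvectorBasis i)) := by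
    simpa [dotProduct] using h1
  rw [h3]
  calc (⇑(hA.eigenvectorBasis i)) ⬝ᵥ (A *ᵥ ⇑(hA.eigenvectorBasis i))
      ≤ kk * ((⇑(hA.eigenvectorBasis i)) ⬝ᵥ (⇑(hA.eigenvectorBasis i))) := hq _
    _ = kk := by rw [hnorm, mul_one]


theorem quad_le [Nonempty V] (A : Matrix V V ℝ) (hA : A.IsHermitian) (θ kk : ℝ)
    (hone : A *ᵥ (fun _ => (1:ℝ)) = fun _ => kk)
    (hcard : (Finset.univ.filter fun i => θ < hA.eigenvalues i).card ≤ 1)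
    (hhigh : ∀ i, θ < hA.eigenvalues i → hA.eigenvalues i = kk)
    (x : V → ℝ) (hx : ∑ v, x v = 0) :
    x ⬝ᵥ (A *ᵥ x) ≤ θ * (x ⬝ᵥ x) := by
  classical
  set b := hA.eigenvectorBasis with hb
  set ev := hA.eigenvalues with hev
  set toE := (WithLp.linearEquiv 2 ℝ (V → ℝ)).symm with htoE
  have hinner : ∀ u v : V → ℝ, @inner ℝ _ _ (toE u) (toE v) = u ⬝ᵥ v := by
    intro u v
    simp [PiLp.inner_apply, RCLike.inner_apply, dotProduct, htoE, mul_comm]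
  have hsymm : ∀ u z : V → ℝ, u ⬝ᵥ (A *ᵥ z) = (A *ᵥ u) ⬝ᵥ z := by
    intro u z
    have ht : Aᵀ = A := by
      have := hA.eq
      rwa [Matrix.conjTranspose_eq_transpose_of_trivial] at this
    rw [Matrix.dotProduct_mulVec, ← Matrix.mulVec_transpose, ht]
  have hbi : ∀ i : V, toE (⇑(b i)) = b i := fun i => rfl
  have hreprA : ∀ (z : V → ℝ) (i : V),
      b.repr (toE (A *ᵥ z)) i = ev i * b.repr (toE z) i := by
    intro z i
    rw [OrthonormalBasis.repr_apply_apply, OrthonormalBasis.repr_apply_apply]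
    rw [← hbi i, hinner, hinner, hsymm, hA.mulVec_eigenvectorBasis, smul_dotProduct]
    simp
    rfl
  have hpars : ∀ u v : V → ℝ, u ⬝ᵥ v = ∑ i, b.repr (toE u) i * b.repr (toE v) i := by
    intro u v
    calc u ⬝ᵥ v = @inner ℝ _ _ (toE u) (toE v) := (hinner u v).symm
      _ = ∑ i, @inner ℝ _ _ (toE u) (b i) * @inner ℝ _ _ (b i) (toE v) :=
          (b.sum_inner_mul_inner _ _).symm
      _ = ∑ i, b.repr (toE u) i * b.repr (toE v) i := by
          refine Finset.sum_congr rfl fun i _ => ?_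
          rw [OrthonormalBasis.repr_apply_apply, OrthonormalBasis.repr_apply_apply,
            real_inner_comm (toE u)]
  set c : V → ℝ := fun i => b.repr (toE x) i with hc
  have hAx : x ⬝ᵥ (A *ᵥ x) = ∑ i, ev i * (c i)^2 := by
    rw [hpars]
    refine Finset.sum_congr rfl fun i _ => ?_
    rw [hreprA]
    ring
  have hxx : x ⬝ᵥ x = ∑ i, (c i)^2 := by
    rw [hpars]
    refine Finset.sum_congr rfl fun i _ => ?_
    ring
  rw [hAx, hxx, Finset.mul_sum]
  refine Finset.sum_le_sum fun i _ => ?_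
  by_cases hθ : ev i ≤ θ
  · exact mul_le_mul_of_nonneg_right hθ (sq_nonneg _)
  push_neg at hθ
  set w := toE (fun _ => (1:ℝ)) with hw
  set d : V → ℝ := fun j => b.repr w j with hd
  have hdj : ∀ j, ev j * d j = kk * d j := by
    intro j
    have h1 := hreprA (fun _ => (1:ℝ)) j
    rw [hone] at h1
    have h2 : (fun _ : V => kk) = kk • (fun _ : V => (1:ℝ)) := by
      funext v; simp
    rw [h2, _root_.map_smul, _root_.map_smul] at h1
    simpa using h1.symm
  have hdzero : ∀ j, j ≠ i → d j = 0 := by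
    intro j hji
    by_contra hdj0
    have hevj : ev j = kk := mul_right_cancel₀ hdj0 (hdj j)
    have hji2 : θ < ev j := by rw [hevj, ← hhigh i hθ]; exact hθ
    have : j = i := by
      have h1 : j ∈ Finset.univ.filter fun t => θ < ev t := by simp [hji2]
      have h2 : i ∈ Finset.univ.filter fun t => θ < ev t := by simp [hθ]
      exact Finset.card_le_one.mp hcard j h1 i h2
    exact hji this
  have hdi : d i ≠ 0 := by
    intro h0
    have hrw : b.repr w = 0 := by
      ext j
      by_cases hji : j = i
      · rw [hji]; simpa using h0
      · simpa using hdzero j hji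
    have hw0 : w = 0 := by
      have := congrArg b.repr.symm hrw
      simpa using this
    have h1 : (fun _ : V => (1:ℝ)) = 0 := by
      have := congrArg (WithLp.linearEquiv 2 ℝ (V → ℝ)) hw0
      simpa [hw, htoE] using this
    have := congrFun h1 (Classical.arbitrary V)
    norm_num at this
  have hci : c i = 0 := by
    have h0 : (fun _ : V => (1:ℝ)) ⬝ᵥ x = 0 := by
      simpa [dotProduct] using hx
    rw [hpars] at h0
    rw [Finset.sum_eq_single i
      (fun j _ hji => mul_eq_zero_of_left (hdzero j hji) _) (by simp)] at h0
    rcases mul_eq_zero.mp h0 with h | h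
    · exact absurd h hdi
    · exact h
  rw [hci]
  simp

end AuxSpectral

/-- A `p`-plex of `G` (as an induced subgraph, identified with its vertex set `s`):
each vertex of `s` is adjacent to all but at most `p - 1` of the other vertices of `s`. -/
def IsPlex {V : Type*} [DecidableEq V] (G : SimpleGraph V) [DecidableRel G.Adj]
    (p : ℕ) (s : Finset V) : Prop :=
  ∀ x ∈ s, ((s.erase x).filter (fun y => ¬ G.Adj x y)).card ≤ p - 1

theorem plex_order_bound {V : Type*} [Fintype V] [DecidableEq V]
    (G : SimpleGraph V) [DecidableRel G.Adj]
    (k n : ℕ) (hn : n = Fintype.card V) (hn2 : 2 ≤ n)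
    (hreg : G.IsRegularOfDegree k)
    -- `μ` lists the eigenvalues of the adjacency matrix of `G`, with multiplicity,
    -- in nonincreasing order; `μ ⟨1, _⟩` is the second largest eigenvalue `θ₂`.
    (μ : Fin n → ℝ) (hmono : Antitone μ)
    (hchar : (G.adjMatrix ℝ).charpoly = ∏ i, (X - C (μ i)))
    (p : ℕ) (hp : 0 < p)
    (s : Finset V) (hs : IsPlex G (p + 1) s) :
    (s.card : ℝ) * ((n : ℝ) - k + μ ⟨1, by omega⟩) ≤
        (n : ℝ) * ((p : ℝ) + 1 + μ ⟨1, by omega⟩) ∧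
      (0 < (n : ℝ) - k + μ ⟨1, by omega⟩ →
        (s.card : ℝ) ≤
          (n : ℝ) * ((p : ℝ) + 1 + μ ⟨1, by omega⟩) / ((n : ℝ) - k + μ ⟨1, by omega⟩)) := by
  classical
  have hNV : Nonempty V := by
    rw [hn] at hn2
    exact Fintype.card_pos_iff.mp (by omega)
  have hcardV : 2 ≤ Fintype.card V := by omega
  set A := G.adjMatrix ℝ with hAdef
  have hA : A.IsHermitian := by
    rw [Matrix.IsHermitian, Matrix.conjTranspose_eq_transpose_of_trivial]
    exact G.isSymm_adjMatrix
  set θ : ℝ := μ ⟨1, by omega⟩ with hθdef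
  set ev := hA.eigenvalues with hevdef
  -- basic matrix facts
  have hApos : ∀ i j, (0:ℝ) ≤ A i j := by
    intro i j
    rw [hAdef, SimpleGraph.adjMatrix_apply]
    split_ifs <;> norm_num
  have hAle1 : ∀ i j, A i j ≤ 1 := by
    intro i j
    rw [hAdef, SimpleGraph.adjMatrix_apply]
    split_ifs <;> norm_num
  have hAsymm : ∀ i j, A i j = A j i := by
    intro i j
    rw [hAdef, SimpleGraph.adjMatrix_apply, SimpleGraph.adjMatrix_apply]
    simp [SimpleGraph.adj_comm]
  have hAdiag : ∀ i, A i i = 0 := by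
    intro i
    rw [hAdef, SimpleGraph.adjMatrix_apply]
    simp
  have hrow : ∀ i, ∑ j, A i j = (k:ℝ) := by
    intro i
    rw [hAdef]
    simp only [SimpleGraph.adjMatrix_apply, Finset.sum_boole]
    rw [← SimpleGraph.neighborFinset_eq_filter, ← SimpleGraph.degree, hreg i]
  have hcol : ∀ j, ∑ i, A i j = (k:ℝ) := by
    intro j
    rw [show ∑ i, A i j = ∑ i, A j i from Finset.sum_congr rfl fun i _ => (hAsymm j i).symm ▸ rfl]
    exact hrow j
  have hone : A *ᵥ (fun _ => (1:ℝ)) = fun _ => (k:ℝ) := by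
    funext v
    simp only [Matrix.mulVec, dotProduct, mul_one]
    exact hrow v
  -- multiset equality between μ and eigenvalues
  have hM : (Finset.univ.val.map μ) = (Finset.univ.val.map ev) := by
    have hcp : ∏ i : Fin n, (X - C (μ i)) = ∏ i : V, (X - C (ev i)) := by
      rw [← hchar, charpoly_eq_prod _ hA]
    have hm1 : Finset.univ.val.map (fun i : Fin n => X - C (μ i))
        = (Finset.univ.val.map μ).map (fun a : ℝ => X - C a) := by
      rw [Multiset.map_map]; rfl
    have hm2 : Finset.univ.val.map (fun i : V => X - C (ev i))
        = (Finset.univ.val.map ev).map (fun a : ℝ => X - C a) := by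
      rw [Multiset.map_map]; rfl
    have h1 := congrArg Polynomial.roots hcp
    rw [Finset.prod_eq_multiset_prod, Finset.prod_eq_multiset_prod, hm1, hm2,
      Polynomial.roots_multiset_prod_X_sub_C, Polynomial.roots_multiset_prod_X_sub_C] at h1
    exact h1
  have hmem2 : ∀ i : V, ∃ j : Fin n, ev i = μ j := by
    intro i
    have h2 : ev i ∈ Finset.univ.val.map μ := by
      rw [hM]
      exact Multiset.mem_map_of_mem _ (Finset.mem_univ_val i)
    rcases Multiset.mem_map.mp h2 with ⟨j, _, hj⟩
    exact ⟨j, hj.symm⟩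
  have hmem1 : ∀ j : Fin n, ∃ i : V, μ j = ev i := by
    intro j
    have h2 : μ j ∈ Finset.univ.val.map ev := by
      rw [← hM]
      exact Multiset.mem_map_of_mem _ (Finset.mem_univ_val j)
    rcases Multiset.mem_map.mp h2 with ⟨i, _, hi⟩
    exact ⟨i, hi.symm⟩
  -- k is the top eigenvalue
  have hray : ∀ v : V → ℝ, v ⬝ᵥ (A *ᵥ v) ≤ (k:ℝ) * (v ⬝ᵥ v) :=
    aux_ray A k hApos hrow hcol
  have hevle : ∀ i, ev i ≤ (k:ℝ) := aux_eigen_le A hA k hray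
  have hkroot : ∃ j : Fin n, μ j = (k:ℝ) := by
    have hdet0 : ((k:ℝ) • (1 : Matrix V V ℝ) - A).det = 0 := by
      rw [← Matrix.exists_mulVec_eq_zero_iff]
      refine ⟨fun _ => 1, ?_, ?_⟩
      · intro h0
        have := congrFun h0 (Classical.arbitrary V)
        norm_num at this
      · rw [Matrix.sub_mulVec, Matrix.smul_mulVec, Matrix.one_mulVec, hone]
        funext v
        simp
    have h5 : A.charpoly.eval (k:ℝ) = 0 := by rw [aux_eval_charpoly]; exact hdet0
    rw [hchar] at h5
    rw [eval_prod] at h5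
    rcases Finset.prod_eq_zero_iff.mp h5 with ⟨j, _, hj⟩
    simp only [eval_sub, eval_X, eval_C] at hj
    exact ⟨j, (sub_eq_zero.mp hj).symm⟩
  have hμ0k : μ ⟨0, by omega⟩ = (k:ℝ) := by
    refine le_antisymm ?_ ?_
    · obtain ⟨i, hi⟩ := hmem1 ⟨0, by omega⟩
      rw [hi]; exact hevle i
    · obtain ⟨j, hj⟩ := hkroot
      rw [← hj]
      exact hmono (by simp [Fin.le_def])
  -- at most one eigenvalue above θ, and it equals k
  have hhigh : ∀ i, θ < ev i → ev i = (k:ℝ) := by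
    intro i hi
    obtain ⟨j, hj⟩ := hmem2 i
    have hj0 : j = ⟨0, by omega⟩ := by
      by_contra hne
      have hj1 : 1 ≤ j.1 := by
        rcases Nat.eq_zero_or_pos j.1 with h | h
        · exact absurd (Fin.ext (by simp [h]) : j = ⟨0, by omega⟩) hne
        · exact h
      have h1j : (⟨1, by omega⟩ : Fin n) ≤ j := by
        rw [Fin.le_def]; exact hj1
      have := hmono h1j
      rw [← hθdef] at this
      rw [hj] at hi
      linarith
    rw [hj, hj0, hμ0k]
  have hcard : ((Finset.univ : Finset V).filter fun i => θ < ev i).card ≤ 1 := by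
    have e1 : ((Finset.univ : Finset V).filter fun i => θ < ev i).card
        = Multiset.countP (fun r => θ < r) (Finset.univ.val.map ev) := by
      rw [Multiset.countP_map]
      rfl
    have e2 : Multiset.countP (fun r => θ < r) (Finset.univ.val.map μ)
        = ((Finset.univ : Finset (Fin n)).filter fun j => θ < μ j).card := by
      rw [Multiset.countP_map]
      rfl
    rw [e1, ← hM, e2]
    have hsub : ((Finset.univ : Finset (Fin n)).filter fun j => θ < μ j)
        ⊆ {⟨0, by omega⟩} := by
      intro j hj
      simp only [Finset.mem_filter] at hj
      simp only [Finset.mem_singleton]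
      by_contra hne
      have hj1 : 1 ≤ j.1 := by
        rcases Nat.eq_zero_or_pos j.1 with h | h
        · exact absurd (Fin.ext (by simp [h]) : j = ⟨0, by omega⟩) hne
        · exact h
      have h1j : (⟨1, by omega⟩ : Fin n) ≤ j := by
        rw [Fin.le_def]; exact hj1
      have := hmono h1j
      rw [← hθdef] at this
      exact absurd this (not_le.mpr hj.2)
    calc ((Finset.univ : Finset (Fin n)).filter fun j => θ < μ j).card
        ≤ ({⟨0, by omega⟩} : Finset (Fin n)).card := Finset.card_le_card hsub
      _ = 1 := Finset.card_singleton _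
  -- θ ≥ -1
  have hθm1 : (-1:ℝ) ≤ θ := by
    obtain ⟨u, v, huv⟩ := Fintype.exists_pair_of_one_lt_card (α := V) (by omega)
    set x0 : V → ℝ := fun w => if w = u then 1 else if w = v then -1 else 0 with hx0def
    have hpt : ∀ (g : V → ℝ) (w : V), x0 w * g w
        = (if w = u then g w else 0) + (if w = v then -g w else 0) := by
      intro g w
      simp only [hx0def]
      have hvu : ¬ v = u := fun h => huv h.symm
      by_cases h1 : w = u
      · rw [h1, if_pos rfl, if_pos rfl, if_neg huv]; ring
      · by_cases h2 : w = v
        · rw [h2, if_neg hvu, if_pos rfl, if_neg hvu, if_pos rfl]; ring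
        · rw [if_neg h1, if_neg h2, if_neg h1, if_neg h2]; ring
    have hdotl : ∀ g : V → ℝ, x0 ⬝ᵥ g = g u - g v := by
      intro g
      simp only [dotProduct]
      calc ∑ w, x0 w * g w
          = ∑ w, ((if w = u then g w else 0) + (if w = v then -g w else 0)) :=
            Finset.sum_congr rfl fun w _ => hpt g w
        _ = g u - g v := by
            rw [Finset.sum_add_distrib, Finset.sum_ite_eq' Finset.univ u g,
              Finset.sum_ite_eq' Finset.univ v (fun w => -g w)]
            simp only [Finset.mem_univ, if_true]
            ring
    have hdotr : ∀ g : V → ℝ, g ⬝ᵥ x0 = g u - g v := by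
      intro g
      rw [dotProduct_comm]
      exact hdotl g
    have hsum0 : ∑ w, x0 w = 0 := by
      have := hdotl (fun _ => 1)
      simp only [dotProduct, mul_one] at this
      simpa using this
    have hq := quad_le A hA θ k hone hcard hhigh x0 hsum0
    have hval : x0 ⬝ᵥ (A *ᵥ x0) = -(A u v) - (A v u) := by
      rw [hdotl]
      have h1 : (A *ᵥ x0) u = A u u - A u v := hdotr (A u)
      have h2 : (A *ᵥ x0) v = A v u - A v v := hdotr (A v)
      rw [h1, h2, hAdiag u, hAdiag v]
      ring
    have hxx : x0 ⬝ᵥ x0 = 2 := by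
      rw [hdotl]
      simp only [hx0def]
      norm_num [huv, Ne.symm huv]
    rw [hval, hxx] at hq
    have h1 : A u v ≤ 1 := hAle1 u v
    have h2 : A v u ≤ 1 := hAle1 v u
    linarith
  -- combinatorial part
  set N : ℝ := (n : ℝ) with hNdef
  set c : ℝ := (s.card : ℝ) with hcdef
  have hN0 : (0:ℝ) < N := by
    rw [hNdef]
    exact_mod_cast (by omega : 0 < n)
  have hNcast : ((Fintype.card V : ℕ) : ℝ) = N := by rw [hNdef, hn]
  set f : V → ℝ := fun v => if v ∈ s then 1 else 0 with hfdef
  have hf_mul : ∀ g : V → ℝ, ∑ u, f u * g u = ∑ u ∈ s, g u := by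
    intro g
    calc ∑ u, f u * g u = ∑ u, (if u ∈ s then g u else 0) := by
          refine Finset.sum_congr rfl fun u _ => ?_
          simp only [hfdef]
          split_ifs <;> ring
      _ = ∑ u ∈ Finset.univ ∩ s, g u := Finset.sum_ite_mem _ _ _
      _ = ∑ u ∈ s, g u := by rw [Finset.univ_inter]
  have hfone : ∀ u ∈ s, f u = (1:ℝ) := fun u hu => by simp [hfdef, hu]
  have hfsum : ∑ u, f u = c := by
    have h1 := hf_mul (fun _ => 1)
    simp only [mul_one] at h1
    rw [h1, Finset.sum_const, nsmul_eq_mul, mul_one, hcdef]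
  have hffsum : ∑ u, f u * f u = c := by
    rw [hf_mul f, Finset.sum_congr rfl hfone, Finset.sum_const, nsmul_eq_mul, mul_one, hcdef]
  set x : V → ℝ := fun v => N * f v - c with hxdef
  have hxsum : ∑ v, x v = 0 := by
    simp only [hxdef]
    rw [Finset.sum_sub_distrib, ← Finset.mul_sum, hfsum, Finset.sum_const, Finset.card_univ,
      nsmul_eq_mul, hNcast]
    ring
  set S1 : ℝ := ∑ u ∈ s, ∑ w ∈ s, A u w with hS1def
  have hT1 : ∑ u, ∑ w, A u w * f u * f w = S1 := by
    calc ∑ u, ∑ w, A u w * f u * f w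
        = ∑ u, f u * (∑ w, f w * A u w) := by
          refine Finset.sum_congr rfl fun u _ => ?_
          rw [Finset.mul_sum]
          exact Finset.sum_congr rfl fun w _ => by ring
      _ = ∑ u ∈ s, ∑ w, f w * A u w := hf_mul _
      _ = ∑ u ∈ s, ∑ w ∈ s, A u w :=
          Finset.sum_congr rfl fun u _ => hf_mul (fun w => A u w)
  have hT2 : ∑ u, ∑ w, A u w * f u = c * k := by
    calc ∑ u, ∑ w, A u w * f u
        = ∑ u, f u * (∑ w, A u w) := by
          refine Finset.sum_congr rfl fun u _ => ?_
          rw [Finset.mul_sum]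
          exact Finset.sum_congr rfl fun w _ => by ring
      _ = ∑ u ∈ s, ∑ w, A u w := hf_mul _
      _ = ∑ u ∈ s, (k:ℝ) := Finset.sum_congr rfl fun u _ => hrow u
      _ = c * k := by rw [Finset.sum_const, nsmul_eq_mul, hcdef]
  have hT3 : ∑ u, ∑ w, A u w * f w = c * k := by
    rw [Finset.sum_comm]
    calc ∑ w, ∑ u, A u w * f w
        = ∑ w, f w * (∑ u, A u w) := by
          refine Finset.sum_congr rfl fun w _ => ?_
          rw [Finset.mul_sum]
          exact Finset.sum_congr rfl fun u _ => by ring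
      _ = ∑ w ∈ s, ∑ u, A u w := hf_mul _
      _ = ∑ w ∈ s, (k:ℝ) := Finset.sum_congr rfl fun w _ => hcol w
      _ = c * k := by rw [Finset.sum_const, nsmul_eq_mul, hcdef]
  have hT4 : ∑ u, ∑ w, A u w = N * k := by
    calc ∑ u, ∑ w, A u w = ∑ u : V, (k:ℝ) := Finset.sum_congr rfl fun u _ => hrow u
      _ = N * k := by rw [Finset.sum_const, Finset.card_univ, nsmul_eq_mul, hNcast]
  have hxAx : x ⬝ᵥ (A *ᵥ x) = N^2 * S1 - N * c^2 * (k:ℝ) := by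
    calc x ⬝ᵥ (A *ᵥ x) = ∑ u, ∑ w, x u * (A u w * x w) := by
          simp only [dotProduct, Matrix.mulVec, Finset.mul_sum]
      _ = ∑ u, ∑ w, (N^2 * (A u w * f u * f w) - N*c*(A u w * f u)
            - N*c*(A u w * f w) + c^2 * A u w) := by
          refine Finset.sum_congr rfl fun u _ => Finset.sum_congr rfl fun w _ => ?_
          simp only [hxdef]
          ring
      _ = N^2 * (∑ u, ∑ w, A u w * f u * f w) - N*c*(∑ u, ∑ w, A u w * f u)
            - N*c*(∑ u, ∑ w, A u w * f w) + c^2 * (∑ u, ∑ w, A u w) := by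
          simp only [Finset.sum_add_distrib, Finset.sum_sub_distrib, ← Finset.mul_sum]
      _ = N^2 * S1 - N * c^2 * k := by rw [hT1, hT2, hT3, hT4]; ring
  have hxx : x ⬝ᵥ x = N^2 * c - N * c^2 := by
    calc x ⬝ᵥ x = ∑ v, (N^2 * (f v * f v) - 2*N*c*(f v) + c^2) := by
          simp only [dotProduct]
          refine Finset.sum_congr rfl fun v _ => ?_
          simp only [hxdef]
          ring
      _ = N^2 * (∑ v, f v * f v) - 2*N*c*(∑ v, f v) + (Fintype.card V : ℕ) * c^2 := by
          simp only [Finset.sum_add_distrib, Finset.sum_sub_distrib, ← Finset.mul_sum,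
            Finset.sum_const, Finset.card_univ, nsmul_eq_mul]
      _ = N^2 * c - N * c^2 := by rw [hffsum, hfsum, hNcast]; ring
  have hS1 : c * (c - 1 - (p:ℝ)) ≤ S1 := by
    have hlb : ∀ u ∈ s, (c - 1 - (p:ℝ)) ≤ ∑ w ∈ s, A u w := by
      intro u hu
      have hfe : s.filter (fun w => G.Adj u w) = (s.erase u).filter (fun w => G.Adj u w) := by
        ext w
        simp only [Finset.mem_filter, Finset.mem_erase]
        constructor
        · rintro ⟨hw, ha⟩
          exact ⟨⟨(G.ne_of_adj ha).symm, hw⟩, ha⟩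
        · rintro ⟨⟨_, hw⟩, ha⟩
          exact ⟨hw, ha⟩
      have hinner : ∑ w ∈ s, A u w
          = (((s.erase u).filter (fun w => G.Adj u w)).card : ℝ) := by
        rw [hAdef]
        simp only [SimpleGraph.adjMatrix_apply]
        rw [Finset.sum_boole, hfe]
      have hsplit := Finset.card_filter_add_card_filter_not
        (s := s.erase u) (p := fun w => G.Adj u w)
      have hcount : ((s.erase u).filter (fun w => ¬ G.Adj u w)).card ≤ p := by
        have := hs u hu
        simpa using this
      have herase : (s.erase u).card = s.card - 1 := Finset.card_erase_of_mem hu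
      have hscard1 : 1 ≤ s.card := Finset.card_pos.mpr ⟨u, hu⟩
      have hnat : ((s.erase u).filter (fun w => G.Adj u w)).card
          + ((s.erase u).filter (fun w => ¬ G.Adj u w)).card + 1 = s.card := by omega
      have hcast : (((s.erase u).filter (fun w => G.Adj u w)).card : ℝ)
          + (((s.erase u).filter (fun w => ¬ G.Adj u w)).card : ℝ) + 1 = c := by
        rw [hcdef]
        exact_mod_cast congrArg (Nat.cast : ℕ → ℝ) hnat
      have hcount' : ((((s.erase u).filter (fun w => ¬ G.Adj u w)).card : ℕ) : ℝ) ≤ (p:ℝ) := by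
        exact_mod_cast hcount
      rw [hinner]
      linarith
    calc c * (c - 1 - (p:ℝ)) = ∑ _u ∈ s, (c - 1 - (p:ℝ)) := by
          rw [Finset.sum_const, nsmul_eq_mul, hcdef]
      _ ≤ S1 := Finset.sum_le_sum hlb
  have H := quad_le A hA θ k hone hcard hhigh x hxsum
  rw [hxAx, hxx] at H
  have hc0 : (0:ℝ) ≤ c := by rw [hcdef]; positivity
  have hfirst : c * (N - (k:ℝ) + θ) ≤ N * ((p:ℝ) + 1 + θ) := by
    rcases eq_or_lt_of_le hc0 with hc | hc
    · rw [← hc, zero_mul]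
      have hp1 : (1:ℝ) ≤ (p:ℝ) := by exact_mod_cast hp
      have : (0:ℝ) ≤ (p:ℝ) + 1 + θ := by linarith [hθm1]
      exact mul_nonneg hN0.le this
    · have hNc : (0:ℝ) < N * c := mul_pos hN0 hc
      have H2 : N^2 * (c * (c - 1 - (p:ℝ))) - N*c^2*(k:ℝ) ≤ θ*(N^2*c - N*c^2) := by
        have h3 : N^2 * (c*(c-1-(p:ℝ))) ≤ N^2 * S1 :=
          mul_le_mul_of_nonneg_left hS1 (by positivity)
        linarith
      rw [← mul_le_mul_iff_right₀ hNc]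
      nlinarith [H2]
  refine ⟨hfirst, fun hpos => ?_⟩
  rw [le_div_iff₀ hpos]
  exact hfirst
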